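/- Balanced–unbalanced factorization (coefficient form of equations (4.5)–(4.6)). Let d ≥ 1, n ≥ 1, and let Λ ⊆ ℝ^d be a Borel set of finite Lebesgue measure. For a signed graph E on a finite vertex set A ⊆ {1,…,n} and x ∈ (ℝ^d)^A set w(E,x) := ∏_{(i,j,s)∈E} (−𝟙[‖x_i − s·x_j‖₂ ≤ 1]). Then Σ_{E signed graph on {1,…,n}} ∫_{Λ^n} w(E,x) dx = Σ_{A ⊆ {1,…,n}} ( Σ_{E_b balanced signed graph on A} ∫_{Λ^A} w(E_b,x) dx ) · ( Σ_{E_u signed graph on {1,…,n}∖A such that every connected component of E_u on the vertex set {1,…,n}∖A contains an unbalanced cycle} ∫_{Λ^{{1,…,n}∖A}} w(E_u,x) dx ). -/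

import Mathlib

open MeasureTheory
open scoped ENNReal Classical

noncomputable section

/-- A signed graph on a vertex set `V` is encoded as a finite set of pairs
`(e, s)` where `e ∈ Sym2 V` is an unordered pair of vertices and `s ∈ {±1} = ℤˣ`
is a sign; properness (no loops) is imposed separately via `¬ e.IsDiag`.
`IsBalancedSG G` says every cycle of `G` is balanced: there is no pair of parallel
edges of opposite signs (a two-edge cycle, always unbalanced), and every cycle on
`k ≥ 3` distinct vertices has sign product `+1`. -/
def IsBalancedSG {V : Type*} (G : Finset (Sym2 V × ℤˣ)) : Prop :=
  (∀ i j : V, i ≠ j → ¬ ((s(i, j), (1 : ℤˣ)) ∈ G ∧ (s(i, j), (-1 : ℤˣ)) ∈ G)) ∧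
  ∀ k : ℕ, ∀ v : Fin (k + 3) → V, Function.Injective v →
    ∀ σ : Fin (k + 3) → ℤˣ, (∀ m : Fin (k + 3), (s(v m, v (m + 1)), σ m) ∈ G) →
      (∏ m, σ m) = 1

/-- The Mayer factor `−𝟙[‖x_i − s·x_j‖ ≤ 1]` attached to a signed edge `({i,j}, s)`. -/
def sgFactor {V : Type*} {d : ℕ} (x : V → EuclideanSpace ℝ (Fin d))
    (p : Sym2 V × ℤˣ) : ℝ :=
  Sym2.lift ⟨fun i j => if ‖x i - (((p.2 : ℤ) : ℝ)) • x j‖ ≤ 1 then (-1 : ℝ) else 0, by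
    intro i j
    beta_reduce
    rcases Int.units_eq_one_or p.2 with h | h <;> rw [h]
    · have h1 : (((1 : ℤˣ) : ℤ) : ℝ) = 1 := by norm_num
      rw [h1, one_smul, one_smul, norm_sub_rev]
    · have h1 : (((-1 : ℤˣ) : ℤ) : ℝ) = -1 := by norm_num
      rw [h1, neg_one_smul, neg_one_smul, sub_neg_eq_add, sub_neg_eq_add, add_comm]⟩ p.1

/-- The underlying simple graph of a signed graph. -/
def sgGraph {V : Type*} (G : Finset (Sym2 V × ℤˣ)) : SimpleGraph V where
  Adj i j := i ≠ j ∧ ∃ s : ℤˣ, (s(i, j), s) ∈ G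
  symm := ⟨by
    rintro i j ⟨hne, s, hs⟩
    exact ⟨hne.symm, s, by rwa [Sym2.eq_swap]⟩⟩
  loopless := ⟨by rintro i ⟨h, -⟩; exact h rfl⟩

/-- `G` contains an unbalanced cycle all of whose vertices lie in `W`. -/
def HasUnbalancedCycleWithin {V : Type*} (G : Finset (Sym2 V × ℤˣ)) (W : Set V) : Prop :=
  (∃ i j : V, i ≠ j ∧ i ∈ W ∧ j ∈ W ∧
      (s(i, j), (1 : ℤˣ)) ∈ G ∧ (s(i, j), (-1 : ℤˣ)) ∈ G) ∨
  (∃ k : ℕ, ∃ v : Fin (k + 3) → V, Function.Injective v ∧ (∀ m, v m ∈ W) ∧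
    ∃ σ : Fin (k + 3) → ℤˣ,
      (∀ m : Fin (k + 3), (s(v m, v (m + 1)), σ m) ∈ G) ∧ (∏ m, σ m) = -1)

/-- Every connected component of `G` (isolated vertices included) contains an
unbalanced cycle. -/
def SpansUnbalanced {V : Type*} (G : Finset (Sym2 V × ℤˣ)) : Prop :=
  ∀ i : V, HasUnbalancedCycleWithin G {j | (sgGraph G).Reachable i j}

namespace BUF
open Finset

variable {V : Type*}

/-- embedding of signed edges over a subtype into signed edges on `V`. -/
def emb (S : Finset V) (q : Sym2 ↥S × ℤˣ) : Sym2 V × ℤˣ := (q.1.map Subtype.val, q.2)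

lemma emb_injective (S : Finset V) : Function.Injective (emb S) := by
  rintro ⟨e1, s1⟩ ⟨e2, s2⟩ h
  simp only [emb, Prod.mk.injEq] at h
  exact Prod.ext (Sym2.map.injective Subtype.val_injective h.1) h.2

lemma emb_pair {S : Finset V} (a b : ↥S) (s : ℤˣ) :
    emb S (s(a, b), s) = (s(a.val, b.val), s) := by
  simp [emb, Sym2.map_pair_eq]

lemma emb_eq_pair {S : Finset V} {q : Sym2 ↥S × ℤˣ} {a b : V} {s : ℤˣ}
    (h : emb S q = (s(a, b), s)) :
    ∃ (ha : a ∈ S) (hb : b ∈ S), q = (s(⟨a, ha⟩, ⟨b, hb⟩), s) := by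
  obtain ⟨e, t⟩ := q
  induction e using Sym2.ind with
  | _ x y =>
    rw [emb_pair] at h
    obtain ⟨h1, h2⟩ := Prod.mk.injEq .. ▸ h
    rw [Sym2.eq_iff] at h1
    rcases h1 with ⟨hx, hy⟩ | ⟨hx, hy⟩
    · refine ⟨hx ▸ x.2, hy ▸ y.2, ?_⟩
      subst h2
      have hx' : x = (⟨a, hx ▸ x.2⟩ : ↥S) := Subtype.ext hx
      have hy' : y = (⟨b, hy ▸ y.2⟩ : ↥S) := Subtype.ext hy
      rw [← hx', ← hy']
    · refine ⟨hy ▸ y.2, hx ▸ x.2, ?_⟩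
      subst h2
      have hx' : x = (⟨b, hx ▸ x.2⟩ : ↥S) := Subtype.ext hx
      have hy' : y = (⟨a, hy ▸ y.2⟩ : ↥S) := Subtype.ext hy
      rw [← hx', ← hy', Sym2.eq_swap]

def pull (S : Finset V) (G : Finset (Sym2 V × ℤˣ)) : Finset (Sym2 ↥S × ℤˣ) :=
  Finset.univ.filter (fun q => emb S q ∈ G)

lemma mem_pull {S : Finset V} {G : Finset (Sym2 V × ℤˣ)} {q : Sym2 ↥S × ℤˣ} :
    q ∈ pull S G ↔ emb S q ∈ G := by simp [pull]

lemma mem_pull_pair {S : Finset V} {G : Finset (Sym2 V × ℤˣ)} {a b : ↥S} {s : ℤˣ} :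
    (s(a, b), s) ∈ pull S G ↔ (s(a.val, b.val), s) ∈ G := by
  rw [mem_pull, emb_pair]


/-- `Bal G i` : the component of `i` contains no unbalanced cycle. -/
def Bal (G : Finset (Sym2 V × ℤˣ)) (i : V) : Prop :=
  ¬ HasUnbalancedCycleWithin G {j | (sgGraph G).Reachable i j}

lemma reach_congr {G : Finset (Sym2 V × ℤˣ)} {i j : V} (h : (sgGraph G).Reachable i j) :
    {k | (sgGraph G).Reachable i k} = {k | (sgGraph G).Reachable j k} :=
  Set.ext fun k => ⟨fun hk => h.symm.trans hk, fun hk => h.trans hk⟩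

lemma bal_congr {G : Finset (Sym2 V × ℤˣ)} {i j : V} (h : (sgGraph G).Reachable i j) :
    Bal G i ↔ Bal G j := by unfold Bal; rw [reach_congr h]

def balSet [Fintype V] (G : Finset (Sym2 V × ℤˣ)) : Finset V :=
  Finset.univ.filter (Bal G)

lemma mem_balSet [Fintype V] {G : Finset (Sym2 V × ℤˣ)} {i : V} :
    i ∈ balSet G ↔ Bal G i := by simp [balSet]

/-- any property closed under adjacency is closed under reachability -/
lemma reachable_closed {G' : SimpleGraph V} {P : V → Prop}
    (hP : ∀ a b, P a → G'.Adj a b → P b) {i j : V} (h : G'.Reachable i j) (hi : P i) :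
    P j := by
  obtain ⟨w⟩ := h
  induction w with
  | nil => exact hi
  | cons hadj _ ih => exact ih (hP _ _ hi hadj)

lemma sg_adj {G : Finset (Sym2 V × ℤˣ)} {a b : V} (hne : a ≠ b) {s : ℤˣ}
    (hs : (s(a, b), s) ∈ G) : (sgGraph G).Adj a b := ⟨hne, s, hs⟩

/-- vertices along a cycle are reachable from the first one -/
lemma reach_cycle {G : Finset (Sym2 V × ℤˣ)} {k : ℕ} {v : Fin (k + 3) → V}
    (hv : Function.Injective v) {σ : Fin (k + 3) → ℤˣ}
    (he : ∀ m, (s(v m, v (m + 1)), σ m) ∈ G) (m : Fin (k + 3)) :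
    (sgGraph G).Reachable (v 0) (v m) := by
  induction m using Fin.induction with
  | zero => exact SimpleGraph.Reachable.refl _
  | succ i ih =>
    refine ih.trans (SimpleGraph.Adj.reachable ?_)
    have h1 : (i.castSucc : Fin (k + 3)) + 1 = i.succ := Fin.coeSucc_eq_succ
    refine sg_adj (fun hEq => ?_) (by rw [← h1]; exact he i.castSucc)
    exact absurd (hv hEq) (Fin.castSucc_lt_succ : i.castSucc < i.succ).ne

/-- reachability transfers from a sub-signed-graph over a subtype to the big graph -/
lemma reach_map {S : Finset V} {Gs : Finset (Sym2 ↥S × ℤˣ)} {H : Finset (Sym2 V × ℤˣ)}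
    (hsub : ∀ q ∈ Gs, emb S q ∈ H) {a b : ↥S}
    (h : (sgGraph Gs).Reachable a b) : (sgGraph H).Reachable a.val b.val := by
  obtain ⟨w⟩ := h
  induction w with
  | nil => exact SimpleGraph.Reachable.refl _
  | cons hadj _ ih =>
    obtain ⟨hne, s, hs⟩ := hadj
    have := hsub _ hs
    rw [emb_pair] at this
    exact (SimpleGraph.Adj.reachable
      (sg_adj (fun hEq => hne (Subtype.ext hEq)) this)).trans ih

/-- reachability transfers into the pullback when the whole component lies in `S` -/
lemma reach_to_pull {S : Finset V} {G : Finset (Sym2 V × ℤˣ)} {a : V} (ha : a ∈ S)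
    (hall : ∀ j, (sgGraph G).Reachable a j → j ∈ S) :
    ∀ {j : V}, (sgGraph G).Reachable a j → ∀ (hj : j ∈ S),
      (sgGraph (pull S G)).Reachable ⟨a, ha⟩ ⟨j, hj⟩ := by
  suffices H : ∀ (x y : V) (w : (sgGraph G).Walk x y) (hx : x ∈ S)
      (hally : ∀ j, (sgGraph G).Reachable x j → j ∈ S) (hy : y ∈ S),
      (sgGraph (pull S G)).Reachable ⟨x, hx⟩ ⟨y, hy⟩ by
    intro j hreach hj
    obtain ⟨w⟩ := hreach
    exact H a j w ha hall hj
  intro x y w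
  induction w with
  | nil => intro hx _ hy; exact SimpleGraph.Reachable.refl _
  | @cons x b y hadj w ih =>
    intro hx hally hy
    have hb : b ∈ S := hally b hadj.reachable
    obtain ⟨hne, s, hs⟩ := hadj
    have hedge : (s((⟨x, hx⟩ : ↥S), (⟨b, hb⟩ : ↥S)), s) ∈ pull S G := by
      rw [mem_pull_pair]; exact hs
    refine (SimpleGraph.Adj.reachable
        (sg_adj (fun hEq => hne (congrArg Subtype.val hEq)) hedge)).trans
      (ih hb (fun j hj => hally j ((SimpleGraph.Adj.reachable (sg_adj hne hs)).trans hj)) hy)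

lemma units_neg_one_of_ne_one {u : ℤˣ} (h : u ≠ 1) : u = -1 := by
  rcases Int.units_eq_one_or u with h1 | h1
  · exact absurd h1 h
  · exact h1


variable [Fintype V] [DecidableEq V]

lemma pull_proper {S : Finset V} {G : Finset (Sym2 V × ℤˣ)}
    (hG : ∀ p ∈ G, ¬ p.1.IsDiag) : ∀ q ∈ pull S G, ¬ q.1.IsDiag :=
  fun q hq hdiag => hG _ (mem_pull.mp hq) (by
    have : (emb S q).1 = q.1.map Subtype.val := rfl
    rw [this]; exact hdiag.map)

lemma pull_balSet_balanced (G : Finset (Sym2 V × ℤˣ)) :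
    IsBalancedSG (pull (balSet G) G) := by
  constructor
  · rintro i j hne ⟨h1, h2⟩
    rw [mem_pull_pair] at h1 h2
    have hiB : Bal G i.val := mem_balSet.mp i.2
    apply hiB
    left
    have hvne : i.val ≠ j.val := fun h => hne (Subtype.ext h)
    exact ⟨i.val, j.val, hvne, SimpleGraph.Reachable.refl _,
      (sg_adj hvne h1).reachable, h1, h2⟩
  · intro k v hv σ he
    by_contra hne1
    have hprod := units_neg_one_of_ne_one hne1
    have hB : Bal G (v 0).val := mem_balSet.mp (v 0).2
    apply hB
    right
    have he' : ∀ m, (s((v m).val, (v (m + 1)).val), σ m) ∈ G :=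
      fun m => mem_pull_pair.mp (he m)
    have hv' : Function.Injective (fun m => (v m).val) :=
      fun m1 m2 h => hv (Subtype.ext h)
    exact ⟨k, fun m => (v m).val, hv', fun m => reach_cycle hv' he' m, σ, he', hprod⟩

lemma pull_compl_spans (G : Finset (Sym2 V × ℤˣ)) :
    SpansUnbalanced (pull (balSet G)ᶜ G) := by
  rintro ⟨iv, hiv⟩
  have hi : ¬ Bal G iv := fun h => (Finset.mem_compl.mp hiv) (mem_balSet.mpr h)
  have hcyc : HasUnbalancedCycleWithin G {j | (sgGraph G).Reachable iv j} := not_not.mp hi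
  have hall : ∀ j, (sgGraph G).Reachable iv j → j ∈ (balSet G)ᶜ := by
    intro j hj
    rw [Finset.mem_compl, mem_balSet]
    intro hBj
    exact hi ((bal_congr hj).mpr hBj)
  rcases hcyc with ⟨a, b, hab, hia, hib, h1, h2⟩ | ⟨k, v, hv, hreach, σ, he, hprod⟩
  · left
    exact ⟨⟨a, hall a hia⟩, ⟨b, hall b hib⟩, fun h => hab (congrArg Subtype.val h),
      reach_to_pull hiv hall hia _, reach_to_pull hiv hall hib _,
      mem_pull_pair.mpr h1, mem_pull_pair.mpr h2⟩
  · right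
    exact ⟨k, fun m => ⟨v m, hall _ (hreach m)⟩,
      fun m1 m2 h => hv (congrArg Subtype.val h),
      fun m => reach_to_pull hiv hall (hreach m) _, σ,
      fun m => mem_pull_pair.mpr (he m), hprod⟩

lemma union_edge_left {A : Finset V} {Gb : Finset (Sym2 ↥A × ℤˣ)}
    {Gu : Finset (Sym2 ↥(Aᶜ) × ℤˣ)} {a b : V} {s : ℤˣ}
    (h : (s(a, b), s) ∈ Gb.image (emb A) ∪ Gu.image (emb Aᶜ)) (ha : a ∈ A) :
    ∃ (ha' : a ∈ A) (hb : b ∈ A), (s(⟨a, ha'⟩, ⟨b, hb⟩), s) ∈ Gb := by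
  rcases Finset.mem_union.mp h with h' | h'
  · obtain ⟨q, hq, hqe⟩ := Finset.mem_image.mp h'
    obtain ⟨ha', hb, rfl⟩ := emb_eq_pair hqe
    exact ⟨ha', hb, hq⟩
  · obtain ⟨q, hq, hqe⟩ := Finset.mem_image.mp h'
    obtain ⟨ha', -, -⟩ := emb_eq_pair hqe
    exact absurd ha (Finset.mem_compl.mp ha')

lemma union_edge_right {A : Finset V} {Gb : Finset (Sym2 ↥A × ℤˣ)}
    {Gu : Finset (Sym2 ↥(Aᶜ) × ℤˣ)} {a b : V} {s : ℤˣ}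
    (h : (s(a, b), s) ∈ Gb.image (emb A) ∪ Gu.image (emb Aᶜ)) (ha : a ∉ A) :
    ∃ (ha' : a ∈ Aᶜ) (hb : b ∈ Aᶜ), (s(⟨a, ha'⟩, ⟨b, hb⟩), s) ∈ Gu := by
  rcases Finset.mem_union.mp h with h' | h'
  · obtain ⟨q, hq, hqe⟩ := Finset.mem_image.mp h'
    obtain ⟨ha', -, -⟩ := emb_eq_pair hqe
    exact absurd ha' ha
  · obtain ⟨q, hq, hqe⟩ := Finset.mem_image.mp h'
    obtain ⟨ha', hb, rfl⟩ := emb_eq_pair hqe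
    exact ⟨ha', hb, hq⟩

lemma balSet_union (A : Finset V) (Gb : Finset (Sym2 ↥A × ℤˣ))
    (Gu : Finset (Sym2 ↥(Aᶜ) × ℤˣ)) (hGb : IsBalancedSG Gb) (hGu : SpansUnbalanced Gu) :
    balSet (Gb.image (emb A) ∪ Gu.image (emb Aᶜ)) = A := by
  set G := Gb.image (emb A) ∪ Gu.image (emb Aᶜ) with hGdef
  ext i
  rw [mem_balSet]
  constructor
  · intro hBal
    by_contra hiA
    apply hBal
    have hi' : i ∈ Aᶜ := Finset.mem_compl.mpr hiA
    have hsub : ∀ q ∈ Gu, emb Aᶜ q ∈ G := fun q hq =>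
      Finset.mem_union_right _ (Finset.mem_image_of_mem _ hq)
    rcases hGu ⟨i, hi'⟩ with ⟨a, b, hab, hia, hib, h1, h2⟩ | ⟨k, v, hv, hreach, σ, he, hprod⟩
    · exact Or.inl ⟨a.val, b.val, fun h => hab (Subtype.ext h),
        reach_map hsub hia, reach_map hsub hib,
        emb_pair a b 1 ▸ hsub _ h1, emb_pair a b (-1) ▸ hsub _ h2⟩
    · exact Or.inr ⟨k, fun m => (v m).val, fun m1 m2 h => hv (Subtype.ext h),
        fun m => reach_map hsub (hreach m), σ,
        fun m => emb_pair (v m) (v (m + 1)) (σ m) ▸ hsub _ (he m), hprod⟩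
  · intro hiA hHas
    have hsubA : ∀ j, (sgGraph G).Reachable i j → j ∈ A := by
      intro j hj
      refine reachable_closed (P := (· ∈ A)) ?_ hj hiA
      rintro a b ha ⟨hne, s, hs⟩
      obtain ⟨-, hb, -⟩ := union_edge_left hs ha
      exact hb
    rcases hHas with ⟨a, b, hab, hia, hib, h1, h2⟩ | ⟨k, v, hv, hreach, σ, he, hprod⟩
    · obtain ⟨ha1, hb1, hm1⟩ := union_edge_left h1 (hsubA a hia)
      obtain ⟨ha2, hb2, hm2⟩ := union_edge_left h2 (hsubA a hia)
      exact hGb.1 ⟨a, ha1⟩ ⟨b, hb1⟩ (fun h => hab (congrArg Subtype.val h)) ⟨hm1, hm2⟩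
    · have hA : ∀ m, v m ∈ A := fun m => hsubA _ (hreach m)
      have he' : ∀ m, (s((⟨v m, hA m⟩ : ↥A), (⟨v (m + 1), hA (m + 1)⟩ : ↥A)), σ m) ∈ Gb := by
        intro m
        obtain ⟨ha', hb', hm⟩ := union_edge_left (he m) (hA m)
        exact hm
      have := hGb.2 k (fun m => ⟨v m, hA m⟩) (fun m1 m2 h => hv (congrArg Subtype.val h)) σ he'
      rw [hprod] at this
      exact absurd this (by decide)

lemma union_proper {A : Finset V} {Gb : Finset (Sym2 ↥A × ℤˣ)}
    {Gu : Finset (Sym2 ↥(Aᶜ) × ℤˣ)} (hb : ∀ p ∈ Gb, ¬ p.1.IsDiag)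
    (hu : ∀ p ∈ Gu, ¬ p.1.IsDiag) :
    ∀ p ∈ Gb.image (emb A) ∪ Gu.image (emb Aᶜ), ¬ p.1.IsDiag := by
  intro p hp
  rcases Finset.mem_union.mp hp with h' | h' <;>
    obtain ⟨q, hq, rfl⟩ := Finset.mem_image.mp h'
  · exact fun hd => hb q hq ((Sym2.isDiag_map Subtype.val_injective).mp hd)
  · exact fun hd => hu q hq ((Sym2.isDiag_map Subtype.val_injective).mp hd)

lemma pull_union_eq {G : Finset (Sym2 V × ℤˣ)} (hG : ∀ p ∈ G, ¬ p.1.IsDiag) :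
    (pull (balSet G) G).image (emb (balSet G)) ∪
      (pull (balSet G)ᶜ G).image (emb (balSet G)ᶜ) = G := by
  ext p
  constructor
  · intro hp
    rcases Finset.mem_union.mp hp with h | h <;>
      · obtain ⟨q, hq, rfl⟩ := Finset.mem_image.mp h
        exact mem_pull.mp hq
  · intro hp
    obtain ⟨e, s⟩ := p
    revert hp
    induction e using Sym2.ind with
    | _ a b =>
      intro hp
      have hab : a ≠ b := fun h => hG _ hp (by simp [h])
      have hreach : (sgGraph G).Reachable a b := (sg_adj hab hp).reachable
      by_cases ha : a ∈ balSet G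
      · have hb : b ∈ balSet G := mem_balSet.mpr ((bal_congr hreach).mp (mem_balSet.mp ha))
        exact Finset.mem_union_left _ (Finset.mem_image.mpr
          ⟨(s((⟨a, ha⟩ : ↥(balSet G)), (⟨b, hb⟩ : ↥(balSet G))), s),
            mem_pull_pair.mpr hp, emb_pair _ _ _⟩)
      · have ha' : a ∈ (balSet G)ᶜ := Finset.mem_compl.mpr ha
        have hb : b ∈ (balSet G)ᶜ := by
          rw [Finset.mem_compl, mem_balSet]
          intro hBb
          exact ha (mem_balSet.mpr ((bal_congr hreach).mpr hBb))
        exact Finset.mem_union_right _ (Finset.mem_image.mpr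
          ⟨(s((⟨a, ha'⟩ : ↥((balSet G)ᶜ)), (⟨b, hb⟩ : ↥((balSet G)ᶜ))), s),
            mem_pull_pair.mpr hp, emb_pair _ _ _⟩)

lemma pull_union_left (A : Finset V) (Gb : Finset (Sym2 ↥A × ℤˣ))
    (Gu : Finset (Sym2 ↥(Aᶜ) × ℤˣ)) :
    pull A (Gb.image (emb A) ∪ Gu.image (emb Aᶜ)) = Gb := by
  ext q
  rw [mem_pull, Finset.mem_union, Finset.mem_image, Finset.mem_image]
  constructor
  · rintro (⟨r, hr, hre⟩ | ⟨r, hr, hre⟩)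
    · rwa [← emb_injective A hre]
    · exfalso
      obtain ⟨e, s⟩ := q
      revert hre
      induction e using Sym2.ind with
      | _ x y =>
        intro hre
        rw [emb_pair] at hre
        obtain ⟨hx, -, -⟩ := emb_eq_pair hre
        exact (Finset.mem_compl.mp hx) x.2
  · intro hq
    exact Or.inl ⟨q, hq, rfl⟩

lemma pull_union_right (A : Finset V) (Gb : Finset (Sym2 ↥A × ℤˣ))
    (Gu : Finset (Sym2 ↥(Aᶜ) × ℤˣ)) :
    pull Aᶜ (Gb.image (emb A) ∪ Gu.image (emb Aᶜ)) = Gu := by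
  ext q
  rw [mem_pull, Finset.mem_union, Finset.mem_image, Finset.mem_image]
  constructor
  · rintro (⟨r, hr, hre⟩ | ⟨r, hr, hre⟩)
    · exfalso
      obtain ⟨e, s⟩ := q
      revert hre
      induction e using Sym2.ind with
      | _ x y =>
        intro hre
        rw [emb_pair] at hre
        obtain ⟨hx, -, -⟩ := emb_eq_pair hre
        exact (Finset.mem_compl.mp x.2) hx
    · rwa [← emb_injective Aᶜ hre]
  · intro hq
    exact Or.inr ⟨q, hq, rfl⟩


lemma sum_fiber_eq (A : Finset V) (f : Finset (Sym2 V × ℤˣ) → ℝ) :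
    ∑ G ∈ Finset.univ.filter (fun G : Finset (Sym2 V × ℤˣ) =>
        (∀ p ∈ G, ¬ p.1.IsDiag) ∧ balSet G = A), f G
    = ∑ pr ∈ (Finset.univ.filter (fun Gb : Finset (Sym2 ↥A × ℤˣ) =>
          (∀ p ∈ Gb, ¬ p.1.IsDiag) ∧ IsBalancedSG Gb)) ×ˢ
        (Finset.univ.filter (fun Gu : Finset (Sym2 ↥(Aᶜ) × ℤˣ) =>
          (∀ p ∈ Gu, ¬ p.1.IsDiag) ∧ SpansUnbalanced Gu)),
      f (pr.1.image (emb A) ∪ pr.2.image (emb Aᶜ)) := by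
  refine Finset.sum_bij' (fun G _ => (pull A G, pull Aᶜ G))
    (fun pr _ => pr.1.image (emb A) ∪ pr.2.image (emb Aᶜ)) ?_ ?_ ?_ ?_ ?_
  · intro G hG
    obtain ⟨hp, hA⟩ := (Finset.mem_filter.mp hG).2
    subst hA
    rw [Finset.mem_product]
    exact ⟨Finset.mem_filter.mpr ⟨Finset.mem_univ _,
        pull_proper hp, pull_balSet_balanced G⟩,
      Finset.mem_filter.mpr ⟨Finset.mem_univ _, pull_proper hp, pull_compl_spans G⟩⟩
  · intro pr hpr
    rw [Finset.mem_product] at hpr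
    obtain ⟨h1, h2⟩ := hpr
    obtain ⟨-, hb1, hb2⟩ := Finset.mem_filter.mp h1
    obtain ⟨-, hu1, hu2⟩ := Finset.mem_filter.mp h2
    exact Finset.mem_filter.mpr ⟨Finset.mem_univ _, union_proper hb1 hu1,
      balSet_union A pr.1 pr.2 hb2 hu2⟩
  · intro G hG
    obtain ⟨hp, hA⟩ := (Finset.mem_filter.mp hG).2
    subst hA
    exact pull_union_eq hp
  · intro pr hpr
    exact Prod.ext (pull_union_left A pr.1 pr.2) (pull_union_right A pr.1 pr.2)
  · intro G hG
    obtain ⟨hp, hA⟩ := (Finset.mem_filter.mp hG).2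
    subst hA
    rw [pull_union_eq hp]


lemma disjoint_images (A : Finset V) (Gb : Finset (Sym2 ↥A × ℤˣ))
    (Gu : Finset (Sym2 ↥(Aᶜ) × ℤˣ)) :
    Disjoint (Gb.image (emb A)) (Gu.image (emb Aᶜ)) := by
  rw [Finset.disjoint_left]
  rintro p hp1 hp2
  obtain ⟨q, hq, rfl⟩ := Finset.mem_image.mp hp1
  obtain ⟨r, hr, hre⟩ := Finset.mem_image.mp hp2
  obtain ⟨e, s⟩ := q
  revert hre
  induction e using Sym2.ind with
  | _ x y =>
    intro hre
    rw [emb_pair] at hre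
    obtain ⟨hx, -, -⟩ := emb_eq_pair hre
    exact (Finset.mem_compl.mp hx) x.2

lemma sgFactor_emb {d : ℕ} (S : Finset V) (x : V → EuclideanSpace ℝ (Fin d))
    (q : Sym2 ↥S × ℤˣ) :
    sgFactor x (emb S q) = sgFactor (fun i : ↥S => x i.val) q := by
  obtain ⟨e, s⟩ := q
  induction e using Sym2.ind with
  | _ a b => rw [emb_pair]; rfl

lemma prod_union_factor {d : ℕ} (A : Finset V) (Gb : Finset (Sym2 ↥A × ℤˣ))
    (Gu : Finset (Sym2 ↥(Aᶜ) × ℤˣ)) (x : V → EuclideanSpace ℝ (Fin d)) :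
    ∏ p ∈ Gb.image (emb A) ∪ Gu.image (emb Aᶜ), sgFactor x p
    = (∏ q ∈ Gb, sgFactor (fun i : ↥A => x i.val) q) *
      ∏ q ∈ Gu, sgFactor (fun i : ↥(Aᶜ) => x i.val) q := by
  rw [Finset.prod_union (disjoint_images A Gb Gu),
    Finset.prod_image (fun a _ b _ h => emb_injective A h),
    Finset.prod_image (fun a _ b _ h => emb_injective Aᶜ h)]
  rw [Finset.prod_congr rfl (fun q _ => sgFactor_emb A x q),
    Finset.prod_congr rfl (fun q _ => sgFactor_emb Aᶜ x q)]

lemma integral_piece {d n : ℕ} (Λ : Set (EuclideanSpace ℝ (Fin d))) (A : Finset (Fin n))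
    (Gb : Finset (Sym2 ↥A × ℤˣ)) (Gu : Finset (Sym2 ↥(Aᶜ) × ℤˣ)) :
    ∫ x in {x : Fin n → EuclideanSpace ℝ (Fin d) | ∀ i, x i ∈ Λ},
      ∏ p ∈ Gb.image (emb A) ∪ Gu.image (emb Aᶜ), sgFactor x p
    = (∫ y in {y : ↥A → EuclideanSpace ℝ (Fin d) | ∀ i, y i ∈ Λ},
        ∏ q ∈ Gb, sgFactor y q) *
      (∫ z in {z : ↥(Aᶜ) → EuclideanSpace ℝ (Fin d) | ∀ i, z i ∈ Λ},
        ∏ q ∈ Gu, sgFactor z q) := by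
  classical
  let eqv : ↥(Aᶜ) ≃ {i : Fin n // ¬ i ∈ A} :=
    Equiv.subtypeEquivRight (fun i => Finset.mem_compl)
  let e1 := MeasurableEquiv.piEquivPiSubtypeProd
    (fun _ : Fin n => EuclideanSpace ℝ (Fin d)) (fun i => i ∈ A)
  have e1p := volume_preserving_piEquivPiSubtypeProd
    (fun _ : Fin n => EuclideanSpace ℝ (Fin d)) (fun i => i ∈ A)
  let f : ({i : Fin n // i ∈ A} → EuclideanSpace ℝ (Fin d)) → ℝ :=
    fun y => ∏ q ∈ Gb, sgFactor y q
  let g : ({i : Fin n // ¬ i ∈ A} → EuclideanSpace ℝ (Fin d)) → ℝ := fun w =>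
    ∏ q ∈ Gu, sgFactor (fun i : ↥(Aᶜ) => w (eqv i)) q
  let T1 : Set ({i : Fin n // i ∈ A} → EuclideanSpace ℝ (Fin d)) := {y | ∀ i, y i ∈ Λ}
  let T2 : Set ({i : Fin n // ¬ i ∈ A} → EuclideanSpace ℝ (Fin d)) := {w | ∀ i, w i ∈ Λ}
  have hpt : ∀ x : Fin n → EuclideanSpace ℝ (Fin d),
      (∏ p ∈ Gb.image (emb A) ∪ Gu.image (emb Aᶜ), sgFactor x p)
        = f ((e1 x).1) * g ((e1 x).2) := by
    intro x
    rw [prod_union_factor]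
    rfl
  have hset : {x : Fin n → EuclideanSpace ℝ (Fin d) | ∀ i, x i ∈ Λ} =
      e1 ⁻¹' (T1 ×ˢ T2) := by
    ext x
    simp only [T1, T2, Set.mem_setOf_eq, Set.mem_preimage, Set.mem_prod]
    constructor
    · intro h
      exact ⟨fun i => h i, fun i => h i⟩
    · rintro ⟨h1, h2⟩ i
      by_cases hi : i ∈ A
      · exact h1 ⟨i, hi⟩
      · exact h2 ⟨i, hi⟩
  have step1 : ∫ x in {x : Fin n → EuclideanSpace ℝ (Fin d) | ∀ i, x i ∈ Λ},
      ∏ p ∈ Gb.image (emb A) ∪ Gu.image (emb Aᶜ), sgFactor x p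
      = ∫ z in T1 ×ˢ T2, f z.1 * g z.2 := by
    rw [MeasureTheory.integral_congr_ae (Filter.Eventually.of_forall fun x => hpt x), hset]
    have key := e1p.setIntegral_preimage_emb (MeasurableEquiv.measurableEmbedding e1)
      (fun z => f z.1 * g z.2) (T1 ×ˢ T2)
    rwa [Subsingleton.elim (Subtype.fintype fun i => i ∈ A) (Finset.Subtype.fintype A)] at key
  have step2 : ∫ z in T1 ×ˢ T2, f z.1 * g z.2
      = (∫ y in T1, f y) * ∫ w in T2, g w := by
    have key := MeasureTheory.setIntegral_prod_mul
      (μ := (volume : Measure ({i : Fin n // i ∈ A} → EuclideanSpace ℝ (Fin d))))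
      (ν := (volume : Measure ({i : Fin n // ¬ i ∈ A} → EuclideanSpace ℝ (Fin d)))) f g T1 T2
    rw [← MeasureTheory.Measure.volume_eq_prod] at key
    exact key
  have e2p := volume_measurePreserving_piCongrLeft
    (fun _ : {i : Fin n // ¬ i ∈ A} => EuclideanSpace ℝ (Fin d)) eqv
  have step3 : ∫ w in T2, g w
      = ∫ z in {z : ↥(Aᶜ) → EuclideanSpace ℝ (Fin d) | ∀ i, z i ∈ Λ},
          ∏ q ∈ Gu, sgFactor z q := by
    rw [← e2p.setIntegral_preimage_emb (MeasurableEquiv.measurableEmbedding _) g T2]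
    have hpre : (MeasurableEquiv.piCongrLeft
          (fun _ : {i : Fin n // ¬ i ∈ A} => EuclideanSpace ℝ (Fin d)) eqv) ⁻¹' T2
        = {z : ↥(Aᶜ) → EuclideanSpace ℝ (Fin d) | ∀ i, z i ∈ Λ} := by
      ext z
      simp only [T2, Set.mem_preimage, Set.mem_setOf_eq]
      constructor
      · intro h i
        have := h (eqv i)
        rwa [MeasurableEquiv.piCongrLeft_apply_apply] at this
      · intro h j
        have : j = eqv (eqv.symm j) := (Equiv.apply_symm_apply eqv j).symm
        rw [this, MeasurableEquiv.piCongrLeft_apply_apply]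
        exact h _
    have hfun : ∀ z : ↥(Aᶜ) → EuclideanSpace ℝ (Fin d),
        g ((MeasurableEquiv.piCongrLeft
          (fun _ : {i : Fin n // ¬ i ∈ A} => EuclideanSpace ℝ (Fin d)) eqv) z)
        = ∏ q ∈ Gu, sgFactor z q := by
      intro z
      refine Finset.prod_congr rfl fun q _ => ?_
      congr 1
    rw [hpre]
    exact MeasureTheory.integral_congr_ae (Filter.Eventually.of_forall fun z => hfun z)
  rw [step1, step2, step3]

end BUF


set_option maxHeartbeats 1000000 in
/-- **Balanced–unbalanced factorization** (coefficient form of equations (4.5)–(4.6)):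
the signed-graph generating integral over all signed graphs on `{1,…,n}` factorizes
over the partition of the vertex set into the balanced part `A` and the unbalanced
part `Aᶜ`. -/
theorem balanced_unbalanced_factorization (d n : ℕ) (hd : 1 ≤ d) (hn : 1 ≤ n)
    (Λ : Set (EuclideanSpace ℝ (Fin d))) (hmeas : MeasurableSet Λ)
    (hfin : volume Λ < ⊤) :
    (∑ G ∈ Finset.univ.filter (fun G : Finset (Sym2 (Fin n) × ℤˣ) =>
        ∀ p ∈ G, ¬ p.1.IsDiag),
      ∫ x in {x : Fin n → EuclideanSpace ℝ (Fin d) | ∀ i, x i ∈ Λ},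
        ∏ p ∈ G, sgFactor x p)
    = ∑ A : Finset (Fin n),
        (∑ Gb ∈ Finset.univ.filter (fun Gb : Finset (Sym2 ↥A × ℤˣ) =>
            (∀ p ∈ Gb, ¬ p.1.IsDiag) ∧ IsBalancedSG Gb),
          ∫ x in {x : ↥A → EuclideanSpace ℝ (Fin d) | ∀ i, x i ∈ Λ},
            ∏ p ∈ Gb, sgFactor x p)
        * (∑ Gu ∈ Finset.univ.filter (fun Gu : Finset (Sym2 ↥(Aᶜ) × ℤˣ) =>
            (∀ p ∈ Gu, ¬ p.1.IsDiag) ∧ SpansUnbalanced Gu),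
          ∫ x in {x : ↥(Aᶜ) → EuclideanSpace ℝ (Fin d) | ∀ i, x i ∈ Λ},
            ∏ p ∈ Gu, sgFactor x p) := by
  classical
  rw [← Finset.sum_fiberwise
    (Finset.univ.filter fun G : Finset (Sym2 (Fin n) × ℤˣ) => ∀ p ∈ G, ¬ p.1.IsDiag)
    BUF.balSet
    (fun G => ∫ x in {x : Fin n → EuclideanSpace ℝ (Fin d) | ∀ i, x i ∈ Λ},
      ∏ p ∈ G, sgFactor x p)]
  refine Finset.sum_congr rfl fun A _ => ?_
  rw [Finset.filter_filter]
  rw [BUF.sum_fiber_eq A (fun G => ∫ x in {x : Fin n → EuclideanSpace ℝ (Fin d) | ∀ i, x i ∈ Λ},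
      ∏ p ∈ G, sgFactor x p)]
  rw [Finset.sum_congr rfl (fun pr _ => BUF.integral_piece Λ A pr.1 pr.2)]
  rw [Finset.sum_mul_sum (R := ℝ)]
  rw [← Finset.sum_product']
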